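/- arXiv:math/0204095 — 2 statements merged into one kernel-verified Lean document; each statement's English description precedes it below -/
import Mathlib

section
/- Let E be a directed graph, W its set of singular vertices (sinks and infinite emitters), V = E⁰ \ W, and let B : V × V → ℤ, C : V × W → ℤ count edges. Let G be the cokernel of the map (Bᵗ − I, Cᵗ) : ℤ^V → ℤ^V ⊕ ℤ^W, and for v ∈ E⁰ write [δ_v] for the class of the standard basis vector. If g : E⁰ → ℝ≥0 is a graph trace (i.e., g(v) = Σ_{e ∈ s⁻¹(v)} g(r(e)) for all nonsingular v, and g(v) ≥ Σᵢ g(r(eᵢ)) for every infinite emitter v and every finite set of edges e₁,…,eₙ ∈ s⁻¹(v)), then the induced homomorphism f : G → ℝ with f([δ_v]) = g(v) maps the subsemigroup Γ generated by { [δ_v] : v ∈ E⁰ } ∪ { [δ_v] − Σ_{e ∈ S} [δ_{r(e)}] : v an infinite emitter, S ⊆ s⁻¹(v) finite } into ℝ≥0. -/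
open Finsupp

section GraphK

/- A directed graph whose vertex set is partitioned as `V ⊕ W`, where `W` is the set of
singular vertices (sinks and infinite emitters) and `V` the nonsingular vertices:
each `v : V` emits finitely many (and at least one) edges. -/
variable {V W E : Type} (s r : E → V ⊕ W) [∀ v : V, Fintype {e : E // s e = Sum.inl v}]

/-- The standard basis vector `δ_u` of `ℤ^V ⊕ ℤ^W`. -/
noncomputable def delta : V ⊕ W → (V →₀ ℤ) × (W →₀ ℤ) :=
  Sum.elim (fun v => (Finsupp.single v 1, 0)) (fun w => ((0 : V →₀ ℤ), Finsupp.single w 1))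

/-- The map `(Bᵗ - I, Cᵗ) : ℤ^V → ℤ^V ⊕ ℤ^W`, sending
`δ_v ↦ Σ_{e ∈ s⁻¹(v)} δ_{r e} - δ_v` for nonsingular `v`. -/
noncomputable def graphK : (V →₀ ℤ) →+ (V →₀ ℤ) × (W →₀ ℤ) :=
  Finsupp.liftAddHom (fun v => zmultiplesHom _
    ((∑ e : {e : E // s e = Sum.inl v}, delta (r e)) - delta (Sum.inl v)))

/-- The generating set of the semigroup `Γ` in the cokernel `G`:
the classes `[δ_u]`, `u ∈ E⁰`, together with the elements
`[δ_w] - Σ_{e ∈ S} [δ_{r e}]` for `w` an infinite emitter and `S ⊆ s⁻¹(w)` finite. -/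
noncomputable def gammaGens :
    Set (((V →₀ ℤ) × (W →₀ ℤ)) ⧸ (graphK s r).range) :=
  (Set.range fun u : V ⊕ W => (QuotientAddGroup.mk (delta u) :
      ((V →₀ ℤ) × (W →₀ ℤ)) ⧸ (graphK s r).range)) ∪
  {x | ∃ (w : W) (S : Finset E), Infinite {e : E // s e = Sum.inr w} ∧
      (∀ e ∈ S, s e = Sum.inr w) ∧
      x = QuotientAddGroup.mk (delta (Sum.inr w) - ∑ e ∈ S, delta (r e))}

end GraphK

/-- if `g` is a graph trace, then the homomorphism `f` on the cokernel
`G = coker (Bᵗ - I, Cᵗ)` with `f([δ_u]) = g(u)` maps the subsemigroup `Γ` generated by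
`{[δ_u]} ∪ {[δ_w] - Σ_{e ∈ S}[δ_{r e}] : w infinite emitter, S ⊆ s⁻¹(w) finite}`
into `ℝ≥0`. -/
theorem stmt3 (V W E : Type) [Countable V] [Countable W] [Countable E]
    (s r : E → V ⊕ W) [∀ v : V, Fintype {e : E // s e = Sum.inl v}]
    (hV : ∀ v : V, Nonempty {e : E // s e = Sum.inl v})
    (hW : ∀ w : W, IsEmpty {e : E // s e = Sum.inr w} ∨ Infinite {e : E // s e = Sum.inr w})
    (g : V ⊕ W → ℝ) (hg0 : ∀ u, 0 ≤ g u)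
    (htrace : ∀ v : V, g (Sum.inl v) = ∑ e : {e : E // s e = Sum.inl v}, g (r e))
    (hbound : ∀ w : W, Infinite {e : E // s e = Sum.inr w} →
      ∀ S : Finset E, (∀ e ∈ S, s e = Sum.inr w) →
        ∑ e ∈ S, g (r e) ≤ g (Sum.inr w))
    (f : (((V →₀ ℤ) × (W →₀ ℤ)) ⧸ (graphK s r).range) →+ ℝ)
    (hf : ∀ u : V ⊕ W, f (QuotientAddGroup.mk (delta u)) = g u) :
    ∀ z ∈ AddSubmonoid.closure (gammaGens s r), 0 ≤ f z := by
  intro z hz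
  induction hz using AddSubmonoid.closure_induction with
  | mem x hx =>
    rcases hx with ⟨u, rfl⟩ | ⟨w, S, hinf, hS, rfl⟩
    · rw [hf]; exact hg0 u
    · have h1 : (QuotientAddGroup.mk (delta (Sum.inr w) - ∑ e ∈ S, delta (r e)) :
          ((V →₀ ℤ) × (W →₀ ℤ)) ⧸ (graphK s r).range)
          = QuotientAddGroup.mk (delta (Sum.inr w))
            - ∑ e ∈ S, QuotientAddGroup.mk (delta (r e)) := by
        push_cast [Finset.sum_sub_distrib]
        simp
      rw [h1, map_sub, map_sum, hf]
      have h2 : ∀ e ∈ S, f (QuotientAddGroup.mk (delta (r e))) = g (r e) :=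
        fun e _ => hf _
      rw [Finset.sum_congr rfl h2]
      linarith [hbound w hinf S hS]
  | zero => simp
  | add x y _ _ hx hy => rw [map_add]; linarith
end

section
/- Let E be a directed graph, W its set of singular vertices, V = E⁰ \ W, and B, C the corresponding edge-count matrices. Let G = coker((Bᵗ − I, Cᵗ) : ℤ^V → ℤ^V ⊕ ℤ^W). Suppose g : E⁰ → ℝ≥0 satisfies: (1) g(v) = Σ_{e ∈ s⁻¹(v)} g(r(e)) for every nonsingular vertex v, and (2) g(v) ≥ Σ_{e ∈ S} g(r(e)) for every infinite emitter v and finite S ⊆ s⁻¹(v). Then there exists a unique group homomorphism f : G → ℝ with f([δ_v]) = g(v) for all v ∈ E⁰, and f sends the class of every element of ℕ^V ⊕ ℕ^W to a nonnegative real. -/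
open Finsupp

section GraphK

/- A directed graph whose vertex set is partitioned as `V ⊕ W`, where `W` is the set of
singular vertices (sinks and infinite emitters) and `V` the nonsingular vertices. -/
variable {V W E : Type} (s r : E → V ⊕ W) [∀ v : V, Fintype {e : E // s e = Sum.inl v}]

noncomputable def phi (g : V ⊕ W → ℝ) : (V →₀ ℤ) × (W →₀ ℤ) →+ ℝ :=
  (Finsupp.liftAddHom (fun v => zmultiplesHom ℝ (g (Sum.inl v)))).comp
      (AddMonoidHom.fst _ _) +
  (Finsupp.liftAddHom (fun w => zmultiplesHom ℝ (g (Sum.inr w)))).comp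
      (AddMonoidHom.snd _ _)

lemma phi_delta (g : V ⊕ W → ℝ) (u : V ⊕ W) : phi g (delta u) = g u := by
  cases u <;> simp [phi, delta]

end GraphK

/-- if `g : E⁰ → ℝ≥0` is a graph trace, then there is a unique group
homomorphism `f` on the cokernel `G = coker (Bᵗ - I, Cᵗ)` with `f([δ_u]) = g(u)` for all
vertices `u`, and `f` sends the class of every element of `ℕ^V ⊕ ℕ^W` to a nonnegative real. -/
theorem stmt5 (V W E : Type) [Countable V] [Countable W] [Countable E]
    (s r : E → V ⊕ W) [∀ v : V, Fintype {e : E // s e = Sum.inl v}]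
    (hV : ∀ v : V, Nonempty {e : E // s e = Sum.inl v})
    (hW : ∀ w : W, IsEmpty {e : E // s e = Sum.inr w} ∨ Infinite {e : E // s e = Sum.inr w})
    (g : V ⊕ W → ℝ) (hg0 : ∀ u, 0 ≤ g u)
    (htrace : ∀ v : V, g (Sum.inl v) = ∑ e : {e : E // s e = Sum.inl v}, g (r e))
    (hbound : ∀ w : W, Infinite {e : E // s e = Sum.inr w} →
      ∀ S : Finset E, (∀ e ∈ S, s e = Sum.inr w) →
        ∑ e ∈ S, g (r e) ≤ g (Sum.inr w)) :
    (∃ f : (((V →₀ ℤ) × (W →₀ ℤ)) ⧸ (graphK s r).range) →+ ℝ,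
      (∀ u : V ⊕ W, f (QuotientAddGroup.mk (delta u)) = g u) ∧
      (∀ x : (V →₀ ℤ) × (W →₀ ℤ), (∀ v, 0 ≤ x.1 v) → (∀ w, 0 ≤ x.2 w) →
        0 ≤ f (QuotientAddGroup.mk x))) ∧
    (∀ f₁ f₂ : (((V →₀ ℤ) × (W →₀ ℤ)) ⧸ (graphK s r).range) →+ ℝ,
      (∀ u : V ⊕ W, f₁ (QuotientAddGroup.mk (delta u)) = g u) →
      (∀ u : V ⊕ W, f₂ (QuotientAddGroup.mk (delta u)) = g u) → f₁ = f₂) := by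
  have hker : (graphK s r).range ≤ (phi g).ker := by
    rintro _ ⟨x, rfl⟩
    have hcomp : (phi g).comp (graphK s r) = 0 := by
      refine Finsupp.addHom_ext fun v n => ?_
      simp only [AddMonoidHom.comp_apply, AddMonoidHom.zero_apply, graphK,
        Finsupp.liftAddHom_apply_single, zmultiplesHom_apply]
      rw [map_zsmul]
      have : phi g ((∑ e : {e : E // s e = Sum.inl v}, delta (r e)) - delta (Sum.inl v)) = 0 := by
        rw [map_sub, map_sum]
        simp only [phi_delta]
        rw [htrace v]
        ring
      rw [this, smul_zero]
    simpa using DFunLike.congr_fun hcomp x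
  refine ⟨⟨QuotientAddGroup.lift _ (phi g) hker, fun u => ?_, fun x h1 h2 => ?_⟩, ?_⟩
  · simpa using phi_delta g u
  · show (0:ℝ) ≤ phi g x
    simp only [phi, AddMonoidHom.add_apply, AddMonoidHom.comp_apply, Finsupp.liftAddHom_apply, Finsupp.sum]
    refine add_nonneg (Finset.sum_nonneg fun v _ => ?_) (Finset.sum_nonneg fun w _ => ?_)
    · simp only [zmultiplesHom_apply, zsmul_eq_mul]
      exact mul_nonneg (by exact_mod_cast h1 v) (hg0 _)
    · simp only [zmultiplesHom_apply, zsmul_eq_mul]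
      exact mul_nonneg (by exact_mod_cast h2 w) (hg0 _)
  · intro f₁ f₂ h₁ h₂
    set F := (f₁ - f₂).comp (QuotientAddGroup.mk' (graphK s r).range) with hF
    have hFd : ∀ u, F (delta u) = 0 := fun u => by
      simp [hF, h₁ u, h₂ u]
    have hL : F.comp (AddMonoidHom.inl (V →₀ ℤ) (W →₀ ℤ)) = 0 :=
      Finsupp.addHom_ext' fun v => AddMonoidHom.ext_int (by
        simpa [delta] using hFd (Sum.inl v))
    have hR : F.comp (AddMonoidHom.inr (V →₀ ℤ) (W →₀ ℤ)) = 0 :=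
      Finsupp.addHom_ext' fun w => AddMonoidHom.ext_int (by
        simpa [delta] using hFd (Sum.inr w))
    have hF0 : ∀ y : (V →₀ ℤ) × (W →₀ ℤ), F y = 0 := by
      intro y
      have : y = (y.1, 0) + (0, y.2) := by simp
      rw [this, map_add]
      have l := DFunLike.congr_fun hL y.1
      have r := DFunLike.congr_fun hR y.2
      simp only [AddMonoidHom.comp_apply, AddMonoidHom.inl_apply, AddMonoidHom.inr_apply,
        AddMonoidHom.zero_apply] at l r
      rw [l, r, add_zero]
    ext x
    have := hF0 x
    simp only [hF, AddMonoidHom.comp_apply, AddMonoidHom.sub_apply, sub_eq_zero,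
      QuotientAddGroup.mk'_apply] at this ⊢
    exact this
end
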